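/- For every tetrahedral erasure channel W and every natural number n, the sum of A(W^c) over all 2^n strings c ∈ {s,p}^n is at most A(W); equivalently, the average of the moment of inertia over all n-th-generation descendants of W is at most A(W)/2^n. -/
import Mathlib


noncomputable section

/-- A quintuple of reals representing a candidate tetrahedral erasure channel
`W = (p, q, r, s, t)`. -/
structure TECQuint where
  p : ℝ
  q : ℝ
  r : ℝ
  s : ℝ
  t : ℝ

namespace TECQuint

/-- `W` is a tetrahedral erasure channel: all five entries are nonnegative and sum to 1. -/
def IsTEC (W : TECQuint) : Prop :=
  0 ≤ W.p ∧ 0 ≤ W.q ∧ 0 ≤ W.r ∧ 0 ≤ W.s ∧ 0 ≤ W.t ∧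
    W.p + W.q + W.r + W.s + W.t = 1

/-- `W` is balanced: `q = r = s`. -/
def Balanced (W : TECQuint) : Prop := W.q = W.r ∧ W.r = W.s

/-- The serial child `W^s`. -/
def ser (W : TECQuint) : TECQuint where
  p := W.p ^ 2
  q := W.p * W.s + W.s * W.q + W.q * W.p
  r := W.p * W.q + W.q * W.r + W.r * W.p
  s := W.p * W.r + W.r * W.s + W.s * W.p
  t := 1 - (W.p ^ 2 + (W.p * W.s + W.s * W.q + W.q * W.p)
      + (W.p * W.q + W.q * W.r + W.r * W.p)
      + (W.p * W.r + W.r * W.s + W.s * W.p))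

/-- The parallel child `W^p`. -/
def par (W : TECQuint) : TECQuint where
  p := 1 - ((W.t * W.s + W.s * W.q + W.q * W.t)
      + (W.t * W.q + W.q * W.r + W.r * W.t)
      + (W.t * W.r + W.r * W.s + W.s * W.t) + W.t ^ 2)
  q := W.t * W.s + W.s * W.q + W.q * W.t
  r := W.t * W.q + W.q * W.r + W.r * W.t
  s := W.t * W.r + W.r * W.s + W.s * W.t
  t := W.t ^ 2

/-- The moment of inertia `A(W) = (q−r)² + (r−s)² + (s−q)²`. -/
def inertia (W : TECQuint) : ℝ :=
  (W.q - W.r) ^ 2 + (W.r - W.s) ^ 2 + (W.s - W.q) ^ 2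

/-- The (conditional) entropy `H(W) = (q+r+s)/2 + t`. -/
def entropy (W : TECQuint) : ℝ := (W.q + W.r + W.s) / 2 + W.t

/-- The edge mass `E(W) = q + r + s`. -/
def edgeMass (W : TECQuint) : ℝ := W.q + W.r + W.s

/-- The Quetelet index `Q(W) = E(W) / (H(W)(1−H(W)))`. -/
def quetelet (W : TECQuint) : ℝ :=
  edgeMass W / (entropy W * (1 - entropy W))

/-- One step of the channel process: `true` picks the serial child, `false` the parallel child. -/
def child (W : TECQuint) (b : Bool) : TECQuint := if b then ser W else par W

/-- The descendant `W^c` of `W` along the string `c ∈ {s,p}^n`. -/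
def descend : TECQuint → {n : ℕ} → (Fin n → Bool) → TECQuint
  | W, 0, _ => W
  | W, _ + 1, c => descend (child W (c 0)) (fun i => c i.succ)

end TECQuint

open TECQuint

lemma schur_aux (a b c : ℝ) (ha : 0 ≤ a) (hb : 0 ≤ b) (hc : 0 ≤ c) :
    0 ≤ (b + c - a) * (c - b) ^ 2 + (a + c - b) * (a - c) ^ 2 + (a + b - c) * (b - a) ^ 2 := by
  rcases le_total a b with h1 | h1 <;> rcases le_total b c with h2 | h2 <;>
    rcases le_total a c with h3 | h3 <;>
  nlinarith [mul_nonneg ha hb, mul_nonneg hb hc, mul_nonneg ha hc, sq_nonneg (a-b),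
    sq_nonneg (b-c), sq_nonneg (a-c), mul_nonneg (mul_nonneg ha hb) hc]

lemma coeff_aux (α x : ℝ) (h0 : 0 ≤ α) (h1 : α ≤ 1) : 0 ≤ (α - α ^ 2) * x ^ 2 :=
  mul_nonneg (by nlinarith) (sq_nonneg x)

lemma key5 (q r s t : ℝ) (hq : 0 ≤ q) (hr : 0 ≤ r) (hs : 0 ≤ s) (ht : 0 ≤ t)
    (h1 : q + r + s + t ≤ 1) :
    ((1 - q - r - s - t + q) ^ 2 * (s - r) ^ 2 + (1 - q - r - s - t + r) ^ 2 * (q - s) ^ 2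
      + (1 - q - r - s - t + s) ^ 2 * (r - q) ^ 2)
    + ((t + q) ^ 2 * (s - r) ^ 2 + (t + r) ^ 2 * (q - s) ^ 2 + (t + s) ^ 2 * (r - q) ^ 2)
    ≤ (q - r) ^ 2 + (r - s) ^ 2 + (s - q) ^ 2 := by
  have schur := schur_aux q r s hq hr hs
  have b1 := coeff_aux (1 - q - r - s - t + q) (s - r) (by linarith) (by linarith)
  have b2 := coeff_aux (1 - q - r - s - t + r) (q - s) (by linarith) (by linarith)
  have b3 := coeff_aux (1 - q - r - s - t + s) (r - q) (by linarith) (by linarith)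
  have b4 := coeff_aux (t + q) (s - r) (by linarith) (by linarith)
  have b5 := coeff_aux (t + r) (q - s) (by linarith) (by linarith)
  have b6 := coeff_aux (t + s) (r - q) (by linarith) (by linarith)
  nlinarith [schur, b1, b2, b3, b4, b5, b6]

lemma istec_ser (W : TECQuint) (hW : W.IsTEC) : (ser W).IsTEC := by
  obtain ⟨hp, hq, hr, hs, ht, hsum⟩ := hW
  have h1 : (W.p + W.q + W.r + W.s + W.t) ^ 2 = 1 := by rw [hsum]; norm_num
  refine ⟨?_, ?_, ?_, ?_, ?_, ?_⟩
  · show (0:ℝ) ≤ W.p ^ 2; positivity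
  · show (0:ℝ) ≤ W.p * W.s + W.s * W.q + W.q * W.p
    have := mul_nonneg hp hs; have := mul_nonneg hs hq; have := mul_nonneg hq hp; linarith
  · show (0:ℝ) ≤ W.p * W.q + W.q * W.r + W.r * W.p
    have := mul_nonneg hp hq; have := mul_nonneg hq hr; have := mul_nonneg hr hp; linarith
  · show (0:ℝ) ≤ W.p * W.r + W.r * W.s + W.s * W.p
    have := mul_nonneg hp hr; have := mul_nonneg hr hs; have := mul_nonneg hs hp; linarith
  · show (0:ℝ) ≤ 1 - (W.p ^ 2 + (W.p * W.s + W.s * W.q + W.q * W.p)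
      + (W.p * W.q + W.q * W.r + W.r * W.p) + (W.p * W.r + W.r * W.s + W.s * W.p))
    nlinarith [mul_nonneg ht hp, mul_nonneg ht hq, mul_nonneg ht hr, mul_nonneg ht hs,
      mul_nonneg hq hr, mul_nonneg hq hs, mul_nonneg hr hs,
      sq_nonneg W.q, sq_nonneg W.r, sq_nonneg W.s, sq_nonneg W.t]
  · show W.p ^ 2 + (W.p * W.s + W.s * W.q + W.q * W.p) + (W.p * W.q + W.q * W.r + W.r * W.p)
      + (W.p * W.r + W.r * W.s + W.s * W.p)
      + (1 - (W.p ^ 2 + (W.p * W.s + W.s * W.q + W.q * W.p)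
        + (W.p * W.q + W.q * W.r + W.r * W.p) + (W.p * W.r + W.r * W.s + W.s * W.p))) = 1
    ring

lemma istec_par (W : TECQuint) (hW : W.IsTEC) : (par W).IsTEC := by
  obtain ⟨hp, hq, hr, hs, ht, hsum⟩ := hW
  have h1 : (W.p + W.q + W.r + W.s + W.t) ^ 2 = 1 := by rw [hsum]; norm_num
  refine ⟨?_, ?_, ?_, ?_, ?_, ?_⟩
  · show (0:ℝ) ≤ 1 - ((W.t * W.s + W.s * W.q + W.q * W.t) + (W.t * W.q + W.q * W.r + W.r * W.t)
      + (W.t * W.r + W.r * W.s + W.s * W.t) + W.t ^ 2)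
    nlinarith [mul_nonneg hp hq, mul_nonneg hp hr, mul_nonneg hp hs, mul_nonneg hp ht,
      mul_nonneg hq hr, mul_nonneg hq hs, mul_nonneg hr hs,
      sq_nonneg W.q, sq_nonneg W.r, sq_nonneg W.s, sq_nonneg W.p]
  · show (0:ℝ) ≤ W.t * W.s + W.s * W.q + W.q * W.t
    have := mul_nonneg ht hs; have := mul_nonneg hs hq; have := mul_nonneg hq ht; linarith
  · show (0:ℝ) ≤ W.t * W.q + W.q * W.r + W.r * W.t
    have := mul_nonneg ht hq; have := mul_nonneg hq hr; have := mul_nonneg hr ht; linarith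
  · show (0:ℝ) ≤ W.t * W.r + W.r * W.s + W.s * W.t
    have := mul_nonneg ht hr; have := mul_nonneg hr hs; have := mul_nonneg hs ht; linarith
  · show (0:ℝ) ≤ W.t ^ 2; positivity
  · show (1 - ((W.t * W.s + W.s * W.q + W.q * W.t) + (W.t * W.q + W.q * W.r + W.r * W.t)
      + (W.t * W.r + W.r * W.s + W.s * W.t) + W.t ^ 2))
      + (W.t * W.s + W.s * W.q + W.q * W.t) + (W.t * W.q + W.q * W.r + W.r * W.t)
      + (W.t * W.r + W.r * W.s + W.s * W.t) + W.t ^ 2 = 1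
    ring

lemma inertia_ser_add_par_le (W : TECQuint) (hW : W.IsTEC) :
    inertia (ser W) + inertia (par W) ≤ inertia W := by
  obtain ⟨hp, hq, hr, hs, ht, hsum⟩ := hW
  have hser : inertia (ser W) = (W.p + W.q) ^ 2 * (W.s - W.r) ^ 2
      + (W.p + W.r) ^ 2 * (W.q - W.s) ^ 2 + (W.p + W.s) ^ 2 * (W.r - W.q) ^ 2 := by
    show ((W.p * W.s + W.s * W.q + W.q * W.p) - (W.p * W.q + W.q * W.r + W.r * W.p)) ^ 2
      + ((W.p * W.q + W.q * W.r + W.r * W.p) - (W.p * W.r + W.r * W.s + W.s * W.p)) ^ 2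
      + ((W.p * W.r + W.r * W.s + W.s * W.p) - (W.p * W.s + W.s * W.q + W.q * W.p)) ^ 2 = _
    ring
  have hpar : inertia (par W) = (W.t + W.q) ^ 2 * (W.s - W.r) ^ 2
      + (W.t + W.r) ^ 2 * (W.q - W.s) ^ 2 + (W.t + W.s) ^ 2 * (W.r - W.q) ^ 2 := by
    show ((W.t * W.s + W.s * W.q + W.q * W.t) - (W.t * W.q + W.q * W.r + W.r * W.t)) ^ 2
      + ((W.t * W.q + W.q * W.r + W.r * W.t) - (W.t * W.r + W.r * W.s + W.s * W.t)) ^ 2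
      + ((W.t * W.r + W.r * W.s + W.s * W.t) - (W.t * W.s + W.s * W.q + W.q * W.t)) ^ 2 = _
    ring
  have hp' : W.p = 1 - W.q - W.r - W.s - W.t := by linarith
  have key := key5 W.q W.r W.s W.t hq hr hs ht (by linarith)
  rw [hser, hpar, hp']
  simp only [inertia]
  linarith [key]

lemma istec_child (W : TECQuint) (hW : W.IsTEC) (b : Bool) : (child W b).IsTEC := by
  cases b <;> simp [child, istec_ser W hW, istec_par W hW]

lemma descend_cons (W : TECQuint) (n : ℕ) (b : Bool) (c : Fin n → Bool) :
    descend W (Fin.cons b c) = descend (child W b) c := by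
  have h : descend W (Fin.cons b c)
      = descend (child W ((Fin.cons b c : Fin (n+1) → Bool) 0))
        (fun i => (Fin.cons b c : Fin (n+1) → Bool) i.succ) := rfl
  rw [h]
  simp [Fin.cons_zero, Fin.cons_succ]

theorem sum_inertia_descendants_le (W : TECQuint) (hW : W.IsTEC) (n : ℕ) :
    ∑ c : Fin n → Bool, inertia (descend W c) ≤ inertia W := by
  induction n generalizing W with
  | zero => simp [descend]
  | succ n ih =>
    have key : ∑ c : Fin (n+1) → Bool, inertia (descend W c)
        = ∑ b : Bool, ∑ c : Fin n → Bool, inertia (descend (child W b) c) := by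
      rw [← Equiv.sum_comp (Fin.consEquiv fun _ => Bool) (fun c => inertia (descend W c)),
        Fintype.sum_prod_type]
      refine Finset.sum_congr rfl fun b _ => Finset.sum_congr rfl fun c _ => ?_
      show inertia (descend W (Fin.cons b c)) = _
      rw [descend_cons]
    rw [key]
    calc ∑ b : Bool, ∑ c : Fin n → Bool, inertia (descend (child W b) c)
        ≤ ∑ b : Bool, inertia (child W b) :=
          Finset.sum_le_sum fun b _ => ih (child W b) (istec_child W hW b)
      _ ≤ inertia W := by
          simpa [child] using inertia_ser_add_par_le W hW
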